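/- Let n > 1. For every open neighborhood U ⊂ ℝⁿ of the unit sphere S^{n−1} = {p ∈ ℝⁿ : |p| = 1}, there exist δ ∈ (0,1) and a smooth embedding h : D^{n−1} → ℝⁿ of the closed unit disk D^{n−1} ⊂ ℝ^{n−1}, with image contained in U, such that, writing ℝⁿ = ℝ^{n−1} × ℝ: (i) h(∂D^{n−1}) = {(y,0) : |y| = 1} = S^{n−2} × {0}, the cusp equator of the standard wrinkle; (ii) h maps the annulus {v : 1−δ ≤ |v| ≤ 1} onto the annulus {(y,0) : 1 ≤ |y| ≤ 1+δ} ⊂ ℝ^{n−1} × {0}; and (iii) h({v : |v| < 1}) does not intersect the unit sphere S^{n−1}. -/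

import Mathlib

open Metric

open Metric Real Set

noncomputable section CuspAux

local notation "E" => expNegInvGlue

lemma E_hasDerivAt (x : ℝ) : HasDerivAt E ((x⁻¹)^2 * E x) x := by
  have h := expNegInvGlue.hasDerivAt_polynomial_eval_inv_mul 1 x
  simpa using h

lemma E_mono : Monotone E := by
  intro x y hxy
  rcases le_or_gt y 0 with hy | hy
  · rw [expNegInvGlue.zero_of_nonpos (hxy.trans hy), expNegInvGlue.zero_of_nonpos hy]
  rcases le_or_gt x 0 with hx | hx
  · rw [expNegInvGlue.zero_of_nonpos hx]; exact (expNegInvGlue.nonneg y)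
  · have : E x = Real.exp (-x⁻¹) := by simp [expNegInvGlue, hx.not_ge]
    have hy' : E y = Real.exp (-y⁻¹) := by simp [expNegInvGlue, hy.not_ge]
    rw [this, hy']
    exact Real.exp_le_exp.2 (by
      have := inv_anti₀ hx hxy
      linarith)

lemma E_pos_formula {x : ℝ} (hx : 0 < x) : E x = Real.exp (-x⁻¹) := by
  simp [expNegInvGlue, hx.not_ge]

lemma E_strict {x y : ℝ} (hy : 0 < y) (hxy : x < y) : E x < E y := by
  rcases le_or_gt x 0 with hx | hx
  · rw [expNegInvGlue.zero_of_nonpos hx]; exact expNegInvGlue.pos_of_pos hy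
  · rw [E_pos_formula hx, E_pos_formula hy]
    apply Real.exp_lt_exp.2
    have := (inv_lt_inv₀ hy hx).2 hxy
    linarith

lemma E_inj {x y : ℝ} (hx : 0 < x) (hy : 0 < y) (hxy : E x = E y) : x = y := by
  rcases lt_trichotomy x y with h | h | h
  · exact absurd hxy (E_strict hy h).ne
  · exact h
  · exact absurd hxy.symm (E_strict hx h).ne

lemma sT_mono : Monotone Real.smoothTransition := by
  intro x y hxy
  have hdx := Real.smoothTransition.pos_denom x
  have hdy := Real.smoothTransition.pos_denom y
  rw [Real.smoothTransition, Real.smoothTransition, div_le_div_iff₀ hdx hdy]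
  have h1 : E x ≤ E y := E_mono hxy
  have h2 : E (1 - y) ≤ E (1 - x) := E_mono (by linarith)
  nlinarith [expNegInvGlue.nonneg x, expNegInvGlue.nonneg (1 - y)]

lemma mono_deriv_nonneg {f : ℝ → ℝ} (hf : Monotone f) (x : ℝ) : 0 ≤ deriv f x := by
  by_cases hd : DifferentiableAt ℝ f x
  · have h := hd.hasDerivAt
    rw [hasDerivAt_iff_tendsto_slope] at h
    refine ge_of_tendsto h ?_
    filter_upwards [self_mem_nhdsWithin] with y hy
    rcases lt_or_gt_of_ne (Ne.symm hy) with h' | h'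
    · rw [slope_def_field]
      exact div_nonneg (sub_nonneg.2 (hf h'.le)) (by linarith)
    · rw [slope_def_field]
      exact div_nonneg_of_nonpos (sub_nonpos.2 (hf h'.le)) (by linarith)
  · rw [deriv_zero_of_not_differentiableAt hd]

/-! ### The δ-parametrized construction -/

variable (δ : ℝ)

def tt : ℝ := (1 - δ)^2
def t0 : ℝ := (1 - δ)^2 / 2
def mu : ℝ := 1 - (1 - δ)^2
def uu (t : ℝ) : ℝ := Real.smoothTransition ((t - t0 δ) / (tt δ - t0 δ))
def rr (t : ℝ) : ℝ := (1 - uu δ t) + uu δ t * (Real.sqrt t)⁻¹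
def sg (t : ℝ) : ℝ := t * rr δ t ^ 2
def Dd : ℝ := E (2 * mu δ) - E (mu δ)
def et (t : ℝ) : ℝ := δ * (E (2 * mu δ) - E (t - tt δ + mu δ)) / Dd δ
def RR (t : ℝ) : ℝ := 1 + et δ t
def AA (t : ℝ) : ℝ := 2 * RR δ t * rr δ t / (1 + sg δ t)
def BB (t : ℝ) : ℝ := RR δ t * (sg δ t - 1) / (sg δ t + 1)

set_option linter.unusedSectionVars false

variable {δ}
variable (hδ0 : 0 < δ) (hδ1 : δ ≤ 1/8)

section Facts
include hδ0 hδ1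

lemma tt_ge : (49:ℝ)/64 ≤ tt δ := by unfold tt; nlinarith
lemma tt_lt_one : tt δ < 1 := by unfold tt; nlinarith
lemma tt_pos : 0 < tt δ := lt_of_lt_of_le (by norm_num) (tt_ge hδ0 hδ1)
lemma t0_lt_tt : t0 δ < tt δ := by
  have := tt_pos hδ0 hδ1; unfold t0; unfold tt at *; linarith
lemma t0_pos : 0 < t0 δ := by have := tt_pos hδ0 hδ1; unfold t0; unfold tt at *; linarith
lemma mu_pos : 0 < mu δ := by have := tt_lt_one hδ0 hδ1; unfold mu; unfold tt at *; linarith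
lemma mu_le : mu δ ≤ 1/4 := by unfold mu; nlinarith
omit hδ0 hδ1 in
lemma mu_eq : mu δ = 1 - tt δ := rfl

lemma Dd_pos : 0 < Dd δ := by
  have h := mu_pos hδ0 hδ1
  exact sub_pos.2 (E_strict (by linarith) (by linarith))

lemma E_half : 2 * E (mu δ) ≤ E (2 * mu δ) := by
  have h := mu_pos hδ0 hδ1
  have h2 := mu_le hδ0 hδ1
  rw [E_pos_formula h, E_pos_formula (by linarith : (0:ℝ) < 2 * mu δ)]
  have key : (mu δ)⁻¹ = (2 * mu δ)⁻¹ + (2 * mu δ)⁻¹ := by field_simp; ring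
  rw [key, neg_add, Real.exp_add]
  have h3 : Real.exp (-(2 * mu δ)⁻¹) ≤ Real.exp (-2) := by
    apply Real.exp_le_exp.2
    have : (2:ℝ) ≤ (2 * mu δ)⁻¹ := by
      rw [le_inv_comm₀ (by norm_num) (by linarith)]
      linarith
    linarith
  have h4 : Real.exp (-2) ≤ 1/2 := by
    rw [Real.exp_neg]
    rw [inv_le_comm₀ (Real.exp_pos 2) (by norm_num)]
    nlinarith [Real.add_one_le_exp (2:ℝ)]
  nlinarith [Real.exp_pos (-(2*mu δ)⁻¹)]

end Facts

section UU
include hδ0 hδ1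

lemma uu_zero {t : ℝ} (ht : t ≤ t0 δ) : uu δ t = 0 := by
  apply Real.smoothTransition.zero_of_nonpos
  apply div_nonpos_of_nonpos_of_nonneg (by linarith)
  linarith [t0_lt_tt hδ0 hδ1]

lemma uu_one {t : ℝ} (ht : tt δ ≤ t) : uu δ t = 1 := by
  apply Real.smoothTransition.one_of_one_le
  rw [le_div_iff₀ (by linarith [t0_lt_tt hδ0 hδ1])]
  linarith

lemma uu_lt_one {t : ℝ} (ht : t < tt δ) : uu δ t < 1 := by
  apply Real.smoothTransition.lt_one_of_lt_one
  rw [div_lt_one (by linarith [t0_lt_tt hδ0 hδ1])]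
  linarith

lemma uu_mono : Monotone (uu δ) := by
  intro x y hxy
  apply sT_mono
  apply div_le_div_of_nonneg_right ?_ ?_ |>.trans (le_refl _)
  · linarith
  · linarith [t0_lt_tt hδ0 hδ1]

end UU

lemma uu_nonneg (t : ℝ) : 0 ≤ uu δ t := Real.smoothTransition.nonneg _
lemma uu_le_one (t : ℝ) : uu δ t ≤ 1 := Real.smoothTransition.le_one _

lemma uu_contDiff : ContDiff ℝ (⊤ : ℕ∞) (uu δ) :=
  Real.smoothTransition.contDiff.comp ((contDiff_id.sub contDiff_const).div_const _)

section RRR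
include hδ0 hδ1

lemma rr_one {t : ℝ} (ht : t < t0 δ) : rr δ t = 1 := by
  rw [rr, uu_zero hδ0 hδ1 ht.le]; ring

lemma rr_inv {t : ℝ} (ht : tt δ ≤ t) : rr δ t = (Real.sqrt t)⁻¹ := by
  rw [rr, uu_one hδ0 hδ1 ht]; ring

lemma rr_pos (t : ℝ) : 0 < rr δ t := by
  rcases lt_or_ge t (t0 δ) with h | h
  · rw [rr_one hδ0 hδ1 h]; norm_num
  · have ht : 0 < t := lt_of_lt_of_le (t0_pos hδ0 hδ1) h
    have hs : 0 < Real.sqrt t := Real.sqrt_pos.2 ht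
    rcases eq_or_lt_of_le (uu_nonneg (δ := δ) t) with h0 | h0
    · rw [rr, ← h0]; norm_num
    · rw [rr]
      have h1 : 0 ≤ 1 - uu δ t := by linarith [uu_le_one (δ := δ) t]
      positivity

omit hδ0 hδ1 in
lemma sg_nonneg {t : ℝ} (ht : 0 ≤ t) : 0 ≤ sg δ t := by
  rw [sg]; positivity

lemma sg_id {t : ℝ} (ht : t < t0 δ) : sg δ t = t := by
  rw [sg, rr_one hδ0 hδ1 ht]; ring

lemma sg_one {t : ℝ} (ht : tt δ ≤ t) : sg δ t = 1 := by
  have ht0 : 0 < t := lt_of_lt_of_le (tt_pos hδ0 hδ1) ht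
  have hs : 0 < Real.sqrt t := Real.sqrt_pos.2 ht0
  rw [sg, rr_inv hδ0 hδ1 ht]
  rw [inv_pow, Real.sq_sqrt ht0.le]
  field_simp

/-- auxiliary: `√t * rr δ t`, a strictly monotone reparametrization on `[0, tt δ]`. -/
lemma sg_eq_st_sq {t : ℝ} (ht : 0 ≤ t) :
    sg δ t = (Real.sqrt t * (1 - uu δ t) + uu δ t)^2 := by
  rcases eq_or_lt_of_le ht with h0 | h0
  · rw [← h0, sg]
    rw [uu_zero hδ0 hδ1 (by linarith [t0_pos hδ0 hδ1])]
    simp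
  · have hs : 0 < Real.sqrt t := Real.sqrt_pos.2 h0
    have hsq : Real.sqrt t ^ 2 = t := Real.sq_sqrt ht
    rw [sg, rr, ← hsq]
    rw [Real.sqrt_sq hs.le]
    field_simp

lemma st_lt_st {x y : ℝ} (hx : 0 ≤ x) (hxy : x < y) (hy : y ≤ tt δ) :
    Real.sqrt x * (1 - uu δ x) + uu δ x < Real.sqrt y * (1 - uu δ y) + uu δ y := by
  have h1 : Real.sqrt x < Real.sqrt y := Real.sqrt_lt_sqrt hx hxy
  have h2 : uu δ x ≤ uu δ y := uu_mono hδ0 hδ1 hxy.le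
  have h3 : uu δ x < 1 := uu_lt_one hδ0 hδ1 (lt_of_lt_of_le hxy hy)
  have h4 : Real.sqrt y ≤ 1 := by
    rw [show (1:ℝ) = Real.sqrt 1 by simp]
    exact Real.sqrt_le_sqrt (by linarith [tt_lt_one hδ0 hδ1])
  nlinarith [uu_nonneg (δ := δ) x, Real.sqrt_nonneg x]

omit hδ0 hδ1 in
lemma st_nonneg {t : ℝ} (ht : 0 ≤ t) : 0 ≤ Real.sqrt t * (1 - uu δ t) + uu δ t := by
  rcases le_or_gt (uu δ t) 1 with h | h
  · have := uu_nonneg (δ := δ) t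
    nlinarith [Real.sqrt_nonneg t]
  · linarith [uu_le_one (δ := δ) t]

lemma st_tt : Real.sqrt (tt δ) * (1 - uu δ (tt δ)) + uu δ (tt δ) = 1 := by
  rw [uu_one hδ0 hδ1 le_rfl]; ring

lemma sg_lt_one {t : ℝ} (ht : 0 ≤ t) (ht' : t < tt δ) : sg δ t < 1 := by
  rw [sg_eq_st_sq hδ0 hδ1 ht]
  have h1 := st_lt_st hδ0 hδ1 ht ht' le_rfl
  rw [st_tt hδ0 hδ1] at h1
  nlinarith [st_nonneg (δ := δ) ht]

lemma sg_strictMono {x y : ℝ} (hx : 0 ≤ x) (hxy : x < y) (hy : y ≤ tt δ) :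
    sg δ x < sg δ y := by
  rw [sg_eq_st_sq hδ0 hδ1 hx, sg_eq_st_sq hδ0 hδ1 (hx.trans hxy.le)]
  have h1 := st_lt_st hδ0 hδ1 hx hxy hy
  nlinarith [st_nonneg (δ := δ) hx]

end RRR

section ET
include hδ0 hδ1

lemma et_nonneg {t : ℝ} (ht : t ≤ 1) : 0 ≤ et δ t := by
  have hD := Dd_pos hδ0 hδ1
  apply div_nonneg ?_ hD.le
  have : E (t - tt δ + mu δ) ≤ E (2 * mu δ) := by
    apply E_mono
    rw [mu_eq]; linarith
  nlinarith

lemma et_pos {t : ℝ} (ht : t < 1) : 0 < et δ t := by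
  have hD := Dd_pos hδ0 hδ1
  apply div_pos ?_ hD
  have : E (t - tt δ + mu δ) < E (2 * mu δ) := by
    apply E_strict (by linarith [mu_pos hδ0 hδ1])
    rw [mu_eq]; linarith
  nlinarith

lemma et_one : et δ 1 = 0 := by
  rw [et]
  rw [show (1:ℝ) - tt δ + mu δ = 2 * mu δ by rw [mu_eq]; ring]
  simp

lemma et_tau : et δ (tt δ) = δ := by
  rw [et]
  rw [show tt δ - tt δ + mu δ = mu δ by ring]
  rw [div_eq_iff (Dd_pos hδ0 hδ1).ne', Dd]

lemma et_le (t : ℝ) : et δ t ≤ 2 * δ := by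
  have hD := Dd_pos hδ0 hδ1
  have h2 := E_half hδ0 hδ1
  rw [et, div_le_iff₀ hD, Dd]
  nlinarith [expNegInvGlue.nonneg (t - tt δ + mu δ), expNegInvGlue.nonneg (mu δ)]

lemma et_anti {x y : ℝ} (hxy : x ≤ y) : et δ y ≤ et δ x := by
  have hD := Dd_pos hδ0 hδ1
  rw [et, et, div_le_div_iff₀ hD hD]
  have : E (x - tt δ + mu δ) ≤ E (y - tt δ + mu δ) := E_mono (by linarith)
  nlinarith [mul_pos hδ0 hD, mul_le_mul_of_nonneg_left this (mul_pos hδ0 hD).le]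

lemma et_strict_anti {x y : ℝ} (hx : tt δ ≤ x) (hxy : x < y) : et δ y < et δ x := by
  have hD := Dd_pos hδ0 hδ1
  rw [et, et, div_lt_div_iff₀ hD hD]
  have : E (x - tt δ + mu δ) < E (y - tt δ + mu δ) := by
    apply E_strict ?_ (by linarith)
    have := mu_pos hδ0 hδ1
    linarith
  nlinarith [mul_pos hδ0 hD, mul_lt_mul_of_pos_left this (mul_pos hδ0 hD)]

lemma RR_ge_one {t : ℝ} (ht : t ≤ 1) : 1 ≤ RR δ t := by
  have := et_nonneg hδ0 hδ1 ht; rw [RR]; linarith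

lemma RR_gt_one {t : ℝ} (ht : t < 1) : 1 < RR δ t := by
  have := et_pos hδ0 hδ1 ht; rw [RR]; linarith

lemma RR_le (t : ℝ) : RR δ t ≤ 1 + 2 * δ := by
  have := et_le hδ0 hδ1 t; rw [RR]; linarith

end ET

lemma RR_contDiff : ContDiff ℝ (⊤ : ℕ∞) (RR δ) := by
  apply contDiff_const.add
  apply ContDiff.div_const
  apply contDiff_const.mul
  exact contDiff_const.sub (expNegInvGlue.contDiff.comp
    (((contDiff_id.sub contDiff_const)).add contDiff_const))

section Smooth
include hδ0 hδ1

lemma rr_contDiffAt {t : ℝ} (ht : 0 < t) : ContDiffAt ℝ (⊤ : ℕ∞) (rr δ) t := by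
  have h1 : ContDiffAt ℝ (⊤ : ℕ∞) (uu δ) t := (uu_contDiff (δ := δ)).contDiffAt
  have h2 : ContDiffAt ℝ (⊤ : ℕ∞) (fun s => (Real.sqrt s)⁻¹) t :=
    (Real.contDiffAt_sqrt ht.ne').inv (Real.sqrt_pos.2 ht).ne'
  exact (contDiff_const.contDiffAt.sub h1).add (h1.mul h2)

lemma sg_contDiffAt {t : ℝ} (ht : 0 < t) : ContDiffAt ℝ (⊤ : ℕ∞) (sg δ) t :=
  contDiffAt_id.mul ((rr_contDiffAt hδ0 hδ1 ht).pow 2)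

lemma AA_contDiffAt {t : ℝ} (ht : 0 ≤ t) : ContDiffAt ℝ (⊤ : ℕ∞) (AA δ) t := by
  rcases lt_or_ge t (t0 δ) with h | h
  · have ht1 : t < 1 := lt_of_lt_of_le (lt_of_lt_of_le h (t0_lt_tt hδ0 hδ1).le)
      (tt_lt_one hδ0 hδ1).le
    have heq : (fun s => 2 * RR δ s * 1 / (1 + s)) =ᶠ[nhds t] AA δ := by
      filter_upwards [Iio_mem_nhds h] with s hs
      rw [AA, rr_one hδ0 hδ1 hs, sg_id hδ0 hδ1 hs]
    apply ContDiffAt.congr_of_eventuallyEq ?_ heq.symm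
    apply ContDiffAt.div
    · exact ((contDiff_const.mul RR_contDiff).mul contDiff_const).contDiffAt
    · exact (contDiff_const.add contDiff_id).contDiffAt
    · intro hc; linarith
  · have ht' : 0 < t := lt_of_lt_of_le (t0_pos hδ0 hδ1) h
    apply ContDiffAt.div
    · exact (contDiff_const.mul RR_contDiff).contDiffAt.mul (rr_contDiffAt hδ0 hδ1 ht')
    · exact contDiff_const.contDiffAt.add (sg_contDiffAt hδ0 hδ1 ht')
    · have := sg_nonneg (δ := δ) ht'.le; intro hc; linarith

lemma BB_contDiffAt {t : ℝ} (ht : 0 ≤ t) : ContDiffAt ℝ (⊤ : ℕ∞) (BB δ) t := by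
  rcases lt_or_ge t (t0 δ) with h | h
  · have heq : (fun s => RR δ s * (s - 1) / (s + 1)) =ᶠ[nhds t] BB δ := by
      filter_upwards [Iio_mem_nhds h] with s hs
      rw [BB, sg_id hδ0 hδ1 hs]
    apply ContDiffAt.congr_of_eventuallyEq ?_ heq.symm
    apply ContDiffAt.div
    · exact (RR_contDiff.mul (contDiff_id.sub contDiff_const)).contDiffAt
    · exact (contDiff_id.add contDiff_const).contDiffAt
    · have h0 : 0 ≤ t := ht; intro hc; linarith
  · have ht' : 0 < t := lt_of_lt_of_le (t0_pos hδ0 hδ1) h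
    apply ContDiffAt.div
    · exact RR_contDiff.contDiffAt.mul ((sg_contDiffAt hδ0 hδ1 ht').sub contDiff_const.contDiffAt)
    · exact (sg_contDiffAt hδ0 hδ1 ht').add contDiff_const.contDiffAt
    · have := sg_nonneg (δ := δ) ht'.le; intro hc; linarith

end Smooth

omit hδ0 hδ1 in
lemma sg_add_one_pos {t : ℝ} (ht : 0 ≤ t) : 0 < sg δ t + 1 := by
  have := sg_nonneg (δ := δ) ht; linarith

omit hδ0 hδ1 in
lemma key_identity {t : ℝ} (ht : 0 ≤ t) :
    t * AA δ t^2 + BB δ t^2 = RR δ t^2 := by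
  have h1 := sg_add_one_pos (δ := δ) ht
  rw [AA, BB]
  have hsg : sg δ t = t * rr δ t ^ 2 := rfl
  rw [show (1 : ℝ) + sg δ t = sg δ t + 1 by ring]
  field_simp
  rw [hsg]
  ring

section Values
include hδ0 hδ1

lemma AA_pos {t : ℝ} (ht : 0 ≤ t) (ht1 : t ≤ 1) : 0 < AA δ t := by
  have h1 := sg_add_one_pos (δ := δ) ht
  have h2 := rr_pos hδ0 hδ1 t
  have h3 := RR_ge_one hδ0 hδ1 ht1
  rw [AA]
  apply div_pos (by nlinarith) (by linarith)

lemma AA_flange {t : ℝ} (ht : tt δ ≤ t) : AA δ t = RR δ t * (Real.sqrt t)⁻¹ := by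
  rw [AA, rr_inv hδ0 hδ1 ht, sg_one hδ0 hδ1 ht]
  ring

lemma BB_flange {t : ℝ} (ht : tt δ ≤ t) : BB δ t = 0 := by
  rw [BB, sg_one hδ0 hδ1 ht]
  simp

lemma AA_one : AA δ 1 = 1 := by
  rw [AA_flange hδ0 hδ1 (tt_lt_one hδ0 hδ1).le, RR, et_one hδ0 hδ1]
  simp

lemma BB_neg {t : ℝ} (ht : 0 ≤ t) (ht' : t < tt δ) : BB δ t < 0 := by
  have h1 := sg_add_one_pos (δ := δ) ht
  have h2 := sg_lt_one hδ0 hδ1 ht ht'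
  have h3 := RR_ge_one hδ0 hδ1 (le_of_lt (lt_of_lt_of_le ht' (tt_lt_one hδ0 hδ1).le))
  rw [BB]
  apply div_neg_of_neg_of_pos (by nlinarith) (by linarith)

lemma BB_strictMono {x y : ℝ} (hx : 0 ≤ x) (hxy : x < y) (hy : y ≤ tt δ) :
    BB δ x < BB δ y := by
  have h1x := sg_add_one_pos (δ := δ) hx
  have h1y := sg_add_one_pos (δ := δ) (hx.trans hxy.le)
  have hsg := sg_strictMono hδ0 hδ1 hx hxy hy
  have hsgx1 : sg δ x < 1 := sg_lt_one hδ0 hδ1 hx (lt_of_lt_of_le hxy hy)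
  have hsgy1 : sg δ y ≤ 1 := by
    rcases eq_or_lt_of_le hy with h | h
    · rw [h, sg_one hδ0 hδ1 le_rfl]
    · exact (sg_lt_one hδ0 hδ1 (hx.trans hxy.le) h).le
  have hRx : 1 ≤ RR δ x := RR_ge_one hδ0 hδ1 (by linarith [tt_lt_one hδ0 hδ1])
  have hRy : 1 ≤ RR δ y := RR_ge_one hδ0 hδ1 (by linarith [tt_lt_one hδ0 hδ1])
  have hRxy : RR δ y ≤ RR δ x := by
    have := et_anti hδ0 hδ1 hxy.le; rw [RR, RR]; linarith
  rw [BB, BB, div_lt_div_iff₀ (by linarith) (by linarith)]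
  have hneg : (sg δ x - 1) * (sg δ y + 1) < 0 :=
    mul_neg_of_neg_of_pos (by linarith) (by linarith)
  have h5 : RR δ x * ((sg δ x - 1) * (sg δ y + 1)) ≤
      RR δ y * ((sg δ x - 1) * (sg δ y + 1)) := by
    apply mul_le_mul_of_nonpos_right hRxy hneg.le
  nlinarith

end Values

section Derivs
include hδ0 hδ1

lemma et_hasDerivAt (t : ℝ) :
    HasDerivAt (et δ)
      (δ * -(((t - tt δ + mu δ)⁻¹)^2 * E (t - tt δ + mu δ) * 1) / Dd δ) t := by
  have hx : HasDerivAt (fun s => s - tt δ + mu δ) 1 t :=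
    ((hasDerivAt_id t).sub_const _).add_const _
  have hE := (E_hasDerivAt (t - tt δ + mu δ)).comp t hx
  exact ((hE.const_sub (E (2 * mu δ))).const_mul δ).div_const (Dd δ)

lemma et_deriv_nonpos (t : ℝ) : deriv (et δ) t ≤ 0 := by
  rw [(et_hasDerivAt hδ0 hδ1 t).deriv]
  have h1 : 0 ≤ ((t - tt δ + mu δ)⁻¹)^2 * E (t - tt δ + mu δ) * 1 := by
    have := expNegInvGlue.nonneg (t - tt δ + mu δ); positivity
  have hD := Dd_pos hδ0 hδ1
  apply div_nonpos_of_nonpos_of_nonneg ?_ hD.le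
  nlinarith

lemma et_deriv_neg {t : ℝ} (ht : tt δ ≤ t) : deriv (et δ) t < 0 := by
  rw [(et_hasDerivAt hδ0 hδ1 t).deriv]
  have hμ := mu_pos hδ0 hδ1
  have hx : 0 < t - tt δ + mu δ := by linarith
  have h1 : 0 < ((t - tt δ + mu δ)⁻¹)^2 * E (t - tt δ + mu δ) * 1 := by
    have := expNegInvGlue.pos_of_pos hx
    have : 0 < ((t - tt δ + mu δ)⁻¹)^2 := by positivity
    positivity
  have hD := Dd_pos hδ0 hδ1
  apply div_neg_of_neg_of_pos ?_ hD
  nlinarith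

lemma RR_hasDerivAt (t : ℝ) : HasDerivAt (RR δ) (deriv (et δ) t) t := by
  have h := (et_hasDerivAt hδ0 hδ1 t)
  rw [h.deriv]
  exact h.const_add 1

lemma BB_deriv_pos {t : ℝ} (ht : 0 < t) (ht' : t < tt δ) : 0 < deriv (BB δ) t := by
  set w := Real.sqrt t with hw_def
  have hw : 0 < w := Real.sqrt_pos.2 ht
  have hw2 : w^2 = t := Real.sq_sqrt ht.le
  have hw1 : w < 1 := by
    rw [hw_def]
    have h1 : t < 1 := lt_of_lt_of_le ht' (tt_lt_one hδ0 hδ1).le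
    calc Real.sqrt t < Real.sqrt 1 := Real.sqrt_lt_sqrt ht.le h1
    _ = 1 := by simp
  -- derivative of uu
  have hc : (0:ℝ) < tt δ - t0 δ := by linarith [t0_lt_tt hδ0 hδ1]
  have hL : HasDerivAt (fun s => (s - t0 δ) / (tt δ - t0 δ)) (1 / (tt δ - t0 δ)) t := by
    simpa using ((hasDerivAt_id t).sub_const (t0 δ)).div_const (tt δ - t0 δ)
  have hsTd : DifferentiableAt ℝ Real.smoothTransition ((t - t0 δ) / (tt δ - t0 δ)) :=
    (Real.smoothTransition.contDiff (n := 1)).differentiable (by norm_num) |>.differentiableAt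
  set dT := deriv Real.smoothTransition ((t - t0 δ) / (tt δ - t0 δ)) with hdT_def
  have hdT : 0 ≤ dT := mono_deriv_nonneg sT_mono _
  have hu : HasDerivAt (uu δ) (dT * (1 / (tt δ - t0 δ))) t :=
    (hsTd.hasDerivAt).comp t hL
  set u' := dT * (1 / (tt δ - t0 δ)) with hu'_def
  have hu' : 0 ≤ u' := by
    apply mul_nonneg hdT
    positivity
  set u := uu δ t with hu_def
  have hu0 : 0 ≤ u := uu_nonneg t
  have hu1 : u < 1 := uu_lt_one hδ0 hδ1 ht'
  -- derivative of sqrt and inverse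
  have hsq : HasDerivAt Real.sqrt (1 / (2 * w)) t := Real.hasDerivAt_sqrt ht.ne'
  have hinv : HasDerivAt (fun s => (Real.sqrt s)⁻¹) (-(1 / (2 * w)) / w^2) t :=
    hsq.inv hw.ne'
  -- derivative of rr
  have hrr : HasDerivAt (rr δ) (-u' + (u' * w⁻¹ + u * (-(1 / (2 * w)) / w^2))) t := by
    have h1 : HasDerivAt (fun s => 1 - uu δ s) (-u') t := hu.const_sub 1
    have h2 : HasDerivAt (fun s => uu δ s * (Real.sqrt s)⁻¹)
        (u' * (Real.sqrt t)⁻¹ + u * (-(1 / (2 * w)) / w^2)) t := hu.mul hinv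
    rw [← hw_def] at h2
    exact h1.add h2
  set r' := -u' + (u' * w⁻¹ + u * (-(1 / (2 * w)) / w^2)) with hr'_def
  set r := rr δ t with hr_def
  have hr : 0 < r := rr_pos hδ0 hδ1 t
  -- derivative of sg
  have hsg : HasDerivAt (sg δ) (1 * r^2 + t * (2 * r^1 * r')) t :=
    (hasDerivAt_id t).mul (hrr.pow 2)
  have hsg_pos : 0 < 1 * r^2 + t * (2 * r^1 * r') := by
    have key : r + 2 * t * r' = (1 - u) + 2 * w * u' * (1 - w) := by
      rw [hr_def, rr, hr'_def, ← hu_def, ← hw_def, ← hw2]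
      field_simp
      ring
    have h2 : 0 < r + 2 * t * r' := by
      rw [key]
      have : 0 ≤ 2 * w * u' * (1 - w) := by
        apply mul_nonneg (by positivity)
        linarith
      linarith
    nlinarith
  -- value of sg
  have hsgv0 : 0 ≤ sg δ t := sg_nonneg ht.le
  have hsgv1 : sg δ t < 1 := sg_lt_one hδ0 hδ1 ht.le ht'
  -- derivative of theta
  have htheta : HasDerivAt (fun s => (sg δ s - 1) / (sg δ s + 1))
      (((1 * r^2 + t * (2 * r^1 * r')) * (sg δ t + 1)
        - (sg δ t - 1) * (1 * r^2 + t * (2 * r^1 * r'))) / (sg δ t + 1)^2) t :=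
    (hsg.sub_const 1).div (hsg.add_const 1) (by linarith)
  have htheta_pos : 0 < ((1 * r^2 + t * (2 * r^1 * r')) * (sg δ t + 1)
        - (sg δ t - 1) * (1 * r^2 + t * (2 * r^1 * r'))) / (sg δ t + 1)^2 := by
    apply div_pos ?_ (by positivity)
    nlinarith
  -- derivative of BB
  have hR := RR_hasDerivAt hδ0 hδ1 t
  have hBB : HasDerivAt (BB δ)
      (deriv (et δ) t * ((sg δ t - 1) / (sg δ t + 1))
        + RR δ t * (((1 * r^2 + t * (2 * r^1 * r')) * (sg δ t + 1)
        - (sg δ t - 1) * (1 * r^2 + t * (2 * r^1 * r'))) / (sg δ t + 1)^2)) t := by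
    have := hR.fun_mul htheta
    refine HasDerivAt.congr_of_eventuallyEq this (Filter.Eventually.of_forall fun s => ?_)
    · rw [BB, mul_div_assoc]
  rw [hBB.deriv]
  have h1 : 0 ≤ deriv (et δ) t * ((sg δ t - 1) / (sg δ t + 1)) := by
    apply mul_nonneg_of_nonpos_of_nonpos (et_deriv_nonpos hδ0 hδ1 t)
    exact div_nonpos_of_nonpos_of_nonneg (by linarith) (by linarith)
  have h2 : 0 < RR δ t * (((1 * r^2 + t * (2 * r^1 * r')) * (sg δ t + 1)
        - (sg δ t - 1) * (1 * r^2 + t * (2 * r^1 * r'))) / (sg δ t + 1)^2) := by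
    apply mul_pos ?_ htheta_pos
    linarith [RR_ge_one hδ0 hδ1 (le_of_lt (lt_of_lt_of_le ht' (tt_lt_one hδ0 hδ1).le))]
  linarith

lemma flange_key {t : ℝ} (ht : tt δ ≤ t) (ht1 : t ≤ 1) :
    AA δ t + 2 * t * deriv (AA δ) t ≠ 0 := by
  have ht0 : (0:ℝ) < t := lt_of_lt_of_le (tt_pos hδ0 hδ1) ht
  have hAd : DifferentiableAt ℝ (AA δ) t :=
    (AA_contDiffAt hδ0 hδ1 ht0.le).differentiableAt (by norm_num)
  have hBd : DifferentiableAt ℝ (BB δ) t :=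
    (BB_contDiffAt hδ0 hδ1 ht0.le).differentiableAt (by norm_num)
  have hA := hAd.hasDerivAt
  have hB := hBd.hasDerivAt
  have hR := RR_hasDerivAt hδ0 hδ1 t
  set a' := deriv (AA δ) t
  set b' := deriv (BB δ) t
  -- Φ := t*AA^2 + BB^2 - RR^2 vanishes near t
  have hPhi : HasDerivAt (fun s => s * AA δ s^2 + BB δ s^2 - RR δ s^2)
      ((1 * AA δ t^2 + t * (2 * AA δ t^1 * a')) + 2 * BB δ t^1 * b'
        - 2 * RR δ t^1 * deriv (et δ) t) t :=
    (((hasDerivAt_id t).mul (hA.pow 2)).add (hB.pow 2)).sub (hR.pow 2)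
  have hzero : (fun s => s * AA δ s^2 + BB δ s^2 - RR δ s^2) =ᶠ[nhds t] (fun _ => (0:ℝ)) := by
    filter_upwards [Ioi_mem_nhds ht0] with s hs
    rw [key_identity (le_of_lt hs)]
    ring
  have hderiv0 : (1 * AA δ t^2 + t * (2 * AA δ t^1 * a')) + 2 * BB δ t^1 * b'
        - 2 * RR δ t^1 * deriv (et δ) t = 0 := by
    have h1 := hPhi.deriv
    rw [Filter.EventuallyEq.deriv_eq hzero] at h1
    rw [← h1, deriv_const]
  have hBB0 : BB δ t = 0 := BB_flange hδ0 hδ1 ht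
  have hR' : deriv (et δ) t < 0 := et_deriv_neg hδ0 hδ1 ht
  have hRpos : 1 ≤ RR δ t := RR_ge_one hδ0 hδ1 ht1
  have hApos : 0 < AA δ t := AA_pos hδ0 hδ1 ht0.le ht1
  intro hc
  rw [hBB0] at hderiv0
  have : AA δ t * (AA δ t + 2 * t * a') = 2 * RR δ t * deriv (et δ) t := by
    nlinarith [hderiv0]
  rw [hc, mul_zero] at this
  nlinarith

end Derivs

section Vector

variable {X : Type*} [NormedAddCommGroup X] [InnerProductSpace ℝ X]

local notation "⟪" x ", " y "⟫" => @inner ℝ _ _ x y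

def hh (δ : ℝ) (v : X) : X × ℝ := (AA δ (‖v‖^2) • v, BB δ (‖v‖^2))

include hδ0 hδ1

lemma hh_contDiff : ContDiff ℝ (⊤ : ℕ∞) (hh δ : X → X × ℝ) := by
  rw [contDiff_iff_contDiffAt]
  intro v
  have hq : ContDiffAt ℝ (⊤ : ℕ∞) (fun w : X => ‖w‖^2) v := (contDiff_norm_sq ℝ).contDiffAt
  have h0 : (0:ℝ) ≤ ‖v‖^2 := by positivity
  have h1 : ContDiffAt ℝ (⊤ : ℕ∞) (fun w : X => AA δ (‖w‖^2)) v :=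
    by have := (AA_contDiffAt hδ0 hδ1 h0).comp v hq; exact this
  have h2 : ContDiffAt ℝ (⊤ : ℕ∞) (fun w : X => BB δ (‖w‖^2)) v :=
    by have := (BB_contDiffAt hδ0 hδ1 h0).comp v hq; exact this
  exact (h1.smul contDiffAt_id).prodMk h2

lemma hh_hasFDerivAt (v : X) :
    HasFDerivAt (hh δ : X → X × ℝ)
      ((AA δ (‖v‖^2) • ContinuousLinearMap.id ℝ X
          + ((deriv (AA δ) (‖v‖^2)) • (2 • (innerSL ℝ v))).smulRight v).prod
        ((deriv (BB δ) (‖v‖^2)) • (2 • (innerSL ℝ v)))) v := by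
  have h0 : (0:ℝ) ≤ ‖v‖^2 := by positivity
  have hq : HasFDerivAt (fun w : X => ‖w‖^2) (2 • (innerSL ℝ v)) v :=
    (hasStrictFDerivAt_norm_sq v).hasFDerivAt
  have hA : HasDerivAt (AA δ) (deriv (AA δ) (‖v‖^2)) (‖v‖^2) :=
    ((AA_contDiffAt hδ0 hδ1 h0).differentiableAt (by norm_num)).hasDerivAt
  have hB : HasDerivAt (BB δ) (deriv (BB δ) (‖v‖^2)) (‖v‖^2) :=
    ((BB_contDiffAt hδ0 hδ1 h0).differentiableAt (by norm_num)).hasDerivAt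
  have hAq : HasFDerivAt (fun w : X => AA δ (‖w‖^2))
      ((deriv (AA δ) (‖v‖^2)) • (2 • (innerSL ℝ v))) v := by have := hA.comp_hasFDerivAt v hq; exact this
  have hBq : HasFDerivAt (fun w : X => BB δ (‖w‖^2))
      ((deriv (BB δ) (‖v‖^2)) • (2 • (innerSL ℝ v))) v := by have := hB.comp_hasFDerivAt v hq; exact this
  exact (hAq.smul (hasFDerivAt_id v)).prodMk hBq

set_option maxHeartbeats 1000000 in
lemma hh_fderiv_inj {v : X} (hv : ‖v‖ ≤ 1) :
    Function.Injective (fderiv ℝ (hh δ : X → X × ℝ) v) := by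
  have h0 : (0:ℝ) ≤ ‖v‖^2 := by positivity
  have h1 : ‖v‖^2 ≤ 1 := by nlinarith [norm_nonneg v]
  rw [(hh_hasFDerivAt hδ0 hδ1 v).fderiv]
  set t := ‖v‖^2 with ht_def
  set a' := deriv (AA δ) t with ha'_def
  set b' := deriv (BB δ) t with hb'_def
  have hker : ∀ u : X,
      ((AA δ t • ContinuousLinearMap.id ℝ X + (a' • 2 • (innerSL ℝ) v).smulRight v).prod
        (b' • 2 • (innerSL ℝ) v)) u = 0 → u = 0 := by
    intro u hu
    rw [Prod.ext_iff] at hu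
    obtain ⟨h1c, h2c⟩ := hu
    simp only [ContinuousLinearMap.prod_apply, ContinuousLinearMap.add_apply,
      ContinuousLinearMap.coe_smul', Pi.smul_apply, ContinuousLinearMap.id_apply,
      ContinuousLinearMap.smulRight_apply, innerSL_apply_apply, smul_eq_mul, nsmul_eq_mul, Pi.mul_apply,
      Nat.cast_ofNat, Prod.fst_zero, Prod.snd_zero] at h1c h2c
    set c := (inner ℝ v u : ℝ) with hc_def
    have h1c' : AA δ t • u + (a' * (2 * c)) • v = 0 := by
      simpa [hc_def] using h1c
    have h2c' : b' * (2 * c) = 0 := by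
      simpa [hc_def] using h2c
    have hApos : 0 < AA δ t := AA_pos hδ0 hδ1 h0 h1
    have hinner : c * (AA δ t + 2 * t * a') = 0 := by
      have h3 := congrArg (fun w => (inner ℝ v w : ℝ)) h1c'
      simp only [inner_add_right, real_inner_smul_right, inner_zero_right] at h3
      rw [real_inner_self_eq_norm_sq, ← ht_def, ← hc_def] at h3
      linear_combination h3
    rcases eq_or_ne c 0 with hc0 | hc0
    · rw [hc0] at h1c'
      simp only [mul_zero, zero_smul, add_zero] at h1c'
      exact (smul_eq_zero.1 h1c').resolve_left hApos.ne'
    · exfalso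
      have hsum : AA δ t + 2 * t * a' = 0 :=
        (mul_eq_zero.1 hinner).resolve_left hc0
      have hb0 : b' = 0 := by
        rcases mul_eq_zero.1 h2c' with h | h
        · exact h
        · exact absurd (by linarith : c = 0) hc0
      have ht0 : 0 < t := by
        rcases eq_or_lt_of_le h0 with h | h
        · exfalso
          apply hc0
          have hv0 : v = 0 := by
            have : ‖v‖ = 0 := by nlinarith [norm_nonneg v]
            exact norm_eq_zero.1 this
          rw [hc_def, hv0]
          exact inner_zero_left u
        · exact h
      rcases lt_or_ge t (tt δ) with hlt | hge
      · exact (BB_deriv_pos hδ0 hδ1 ht0 hlt).ne' (hb'_def ▸ hb0)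
      · exact flange_key hδ0 hδ1 hge h1 (by rw [← ha'_def]; exact hsum)
  intro u1 u2 h12
  have h3 := hker (u1 - u2) (by rw [map_sub, h12, sub_self])
  exact sub_eq_zero.1 h3

lemma norm_sq_le_one {v : X} (hv : ‖v‖ ≤ 1) : ‖v‖^2 ≤ 1 := by
  nlinarith [norm_nonneg v]

lemma hh_injOn : Set.InjOn (hh δ : X → X × ℝ) (Metric.closedBall 0 1) := by
  intro v hv w hw heq
  rw [Metric.mem_closedBall, dist_zero_right] at hv hw
  set t := ‖v‖^2 with ht_def
  set s := ‖w‖^2 with hs_def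
  have ht0 : (0:ℝ) ≤ t := by positivity
  have hs0 : (0:ℝ) ≤ s := by positivity
  have ht1 : t ≤ 1 := norm_sq_le_one hδ0 hδ1 hv
  have hs1 : s ≤ 1 := norm_sq_le_one hδ0 hδ1 hw
  rw [Prod.ext_iff] at heq
  obtain ⟨hA, hB⟩ := heq
  simp only [hh] at hA hB
  rw [← ht_def, ← hs_def] at hA hB
  have htteq : t = s := by
    rcases lt_or_ge t (tt δ) with h1 | h1 <;> rcases lt_or_ge s (tt δ) with h2 | h2
    · rcases lt_trichotomy t s with h | h | h
      · exact absurd hB (BB_strictMono hδ0 hδ1 ht0 h h2.le).ne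
      · exact h
      · exact absurd hB.symm (BB_strictMono hδ0 hδ1 hs0 h h1.le).ne
    · exact absurd (hB.trans (BB_flange hδ0 hδ1 h2)) (BB_neg hδ0 hδ1 ht0 h1).ne
    · exact absurd (hB.symm.trans (BB_flange hδ0 hδ1 h1)) (BB_neg hδ0 hδ1 hs0 h2).ne
    · -- both in the flange region
      have hBt : BB δ t = 0 := BB_flange hδ0 hδ1 h1
      have hBs : BB δ s = 0 := BB_flange hδ0 hδ1 h2
      have hnorm : AA δ t * ‖v‖ = AA δ s * ‖w‖ := by
        have := congrArg norm hA
        rwa [norm_smul, norm_smul, Real.norm_eq_abs, Real.norm_eq_abs,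
          abs_of_pos (AA_pos hδ0 hδ1 ht0 ht1), abs_of_pos (AA_pos hδ0 hδ1 hs0 hs1)] at this
      have hRR : RR δ t ^ 2 = RR δ s ^ 2 := by
        have e1 := key_identity (δ := δ) ht0
        have e2 := key_identity (δ := δ) hs0
        rw [hBt] at e1; rw [hBs] at e2
        rw [← e1, ← e2]
        have h6 : (AA δ t * ‖v‖)^2 = (AA δ s * ‖w‖)^2 := by rw [hnorm]
        rw [mul_pow, mul_pow, ← ht_def, ← hs_def] at h6
        nlinarith [h6]
      have hRReq : RR δ t = RR δ s := by
        have hRt := RR_ge_one hδ0 hδ1 ht1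
        have hRs := RR_ge_one hδ0 hδ1 hs1
        nlinarith
      have hEt : E (t - tt δ + mu δ) = E (s - tt δ + mu δ) := by
        have h3 : et δ t = et δ s := by rw [RR, RR] at hRReq; linarith
        rw [et, et, div_eq_div_iff (Dd_pos hδ0 hδ1).ne' (Dd_pos hδ0 hδ1).ne'] at h3
        have h4 := mul_right_cancel₀ (Dd_pos hδ0 hδ1).ne' h3
        have h5 := mul_left_cancel₀ hδ0.ne' h4
        linarith
      have hmu := mu_pos hδ0 hδ1
      have := E_inj (by linarith : (0:ℝ) < t - tt δ + mu δ)
        (by linarith : (0:ℝ) < s - tt δ + mu δ) hEt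
      linarith
  rw [← htteq] at hA
  exact smul_right_injective X (AA_pos hδ0 hδ1 ht0 ht1).ne' hA

lemma hh_norm_val (v : X) : ‖(hh δ v).1‖^2 + (hh δ v).2^2 = RR δ (‖v‖^2) ^ 2 := by
  have h0 : (0:ℝ) ≤ ‖v‖^2 := by positivity
  have := key_identity (δ := δ) h0
  rw [hh]
  simp only
  rw [norm_smul, Real.norm_eq_abs, mul_pow, sq_abs]
  nlinarith [this]

lemma hh_flange {v : X} (h1 : 1 - δ ≤ ‖v‖) :
    hh δ v = ((RR δ (‖v‖^2) * ‖v‖⁻¹) • v, (0:ℝ)) := by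
  have hd : 0 ≤ 1 - δ := by linarith
  have htt : tt δ ≤ ‖v‖^2 := by
    rw [tt]
    nlinarith
  rw [hh, AA_flange hδ0 hδ1 htt, BB_flange hδ0 hδ1 htt,
    Real.sqrt_sq (norm_nonneg v)]

lemma hh_sphere {v : X} (h1 : ‖v‖ = 1) : hh δ v = (v, (0:ℝ)) := by
  rw [hh_flange hδ0 hδ1 (by rw [h1]; linarith), h1]
  norm_num
  rw [RR, et_one hδ0 hδ1]
  norm_num

end Vector

end CuspAux


/-- Preparation for the Whitney surgery of cusps: for `n > 1` and any open
neighborhood `U ⊂ ℝⁿ = ℝ^{n−1} × ℝ` of the unit sphere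
`S^{n−1} = {|y|² + z² = 1}`, there are `δ ∈ (0,1)` and a smooth embedding
`h : D^{n−1} → ℝⁿ` with image in `U` such that (i) `h(∂D^{n−1})` is the cusp
equator `{(y,0) : |y| = 1}`; (ii) `h` maps the annulus `{1−δ ≤ |v| ≤ 1}` onto
`{(y,0) : 1 ≤ |y| ≤ 1+δ}`; (iii) `h(Int D^{n−1})` misses the sphere `S^{n−1}`. -/
theorem exists_cusp_surgery_disk (n : ℕ) (hn : 1 < n)
    (U : Set (EuclideanSpace ℝ (Fin (n - 1)) × ℝ)) (hU : IsOpen U)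
    (hSU : {p : EuclideanSpace ℝ (Fin (n - 1)) × ℝ | ‖p.1‖^2 + p.2^2 = 1} ⊆ U) :
    ∃ δ : ℝ, 0 < δ ∧ δ < 1 ∧
      ∃ h : EuclideanSpace ℝ (Fin (n - 1)) → EuclideanSpace ℝ (Fin (n - 1)) × ℝ,
        ContDiff ℝ (⊤ : ℕ∞) h ∧
        Set.InjOn h (closedBall 0 1) ∧
        (∀ v ∈ closedBall (0 : EuclideanSpace ℝ (Fin (n - 1))) 1,
          Function.Injective ⇑(fderiv ℝ h v)) ∧
        h '' closedBall 0 1 ⊆ U ∧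
        h '' sphere 0 1 =
          {p : EuclideanSpace ℝ (Fin (n - 1)) × ℝ | ‖p.1‖ = 1 ∧ p.2 = 0} ∧
        h '' {v : EuclideanSpace ℝ (Fin (n - 1)) | 1 - δ ≤ ‖v‖ ∧ ‖v‖ ≤ 1} =
          {p : EuclideanSpace ℝ (Fin (n - 1)) × ℝ |
            p.2 = 0 ∧ 1 ≤ ‖p.1‖ ∧ ‖p.1‖ ≤ 1 + δ} ∧
        (∀ v : EuclideanSpace ℝ (Fin (n - 1)), ‖v‖ < 1 →
          ‖(h v).1‖^2 + (h v).2^2 ≠ 1) := by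
  classical
  have hgc : Continuous (fun p : EuclideanSpace ℝ (Fin (n - 1)) × ℝ => ‖p.1‖^2 + p.2^2) :=
    (continuous_fst.norm.pow 2).add (continuous_snd.pow 2)
  obtain ⟨ε, hε0, hεU⟩ : ∃ ε : ℝ, 0 < ε ∧ ∀ p : EuclideanSpace ℝ (Fin (n - 1)) × ℝ,
      1 ≤ ‖p.1‖^2 + p.2^2 → ‖p.1‖^2 + p.2^2 < 1 + ε → p ∈ U := by
    set K := {p : EuclideanSpace ℝ (Fin (n - 1)) × ℝ |
      (1 ≤ ‖p.1‖^2 + p.2^2 ∧ ‖p.1‖^2 + p.2^2 ≤ 2) ∧ p ∉ U} with hK_def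
    have hclosed : IsClosed K := by
      rw [hK_def]
      exact (((isClosed_le continuous_const hgc).inter
        (isClosed_le hgc continuous_const))).inter hU.isClosed_compl
    have hbdd : Bornology.IsBounded K := by
      apply (Metric.isBounded_closedBall
        (x := (0 : EuclideanSpace ℝ (Fin (n - 1)) × ℝ)) (r := 2)).subset
      intro p hp
      rw [Metric.mem_closedBall, dist_zero_right]
      have h2 : ‖p.1‖^2 + p.2^2 ≤ 2 := hp.1.2
      have hp1 : ‖p.1‖ ≤ 2 := by nlinarith [norm_nonneg p.1, sq_nonneg p.2]
      have hp2 : ‖p.2‖ ≤ 2 := by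
        rw [Real.norm_eq_abs, abs_le]
        constructor <;> nlinarith [norm_nonneg p.1, sq_nonneg ‖p.1‖]
      rw [Prod.norm_def]
      exact max_le hp1 hp2
    have hKc : IsCompact K := Metric.isCompact_of_isClosed_isBounded hclosed hbdd
    rcases K.eq_empty_or_nonempty with hKe | hKne
    · refine ⟨1/2, by norm_num, fun p hp1 hp2 => ?_⟩
      by_contra hpU
      have hmem : p ∈ K := ⟨⟨hp1, by linarith⟩, hpU⟩
      rw [hKe] at hmem
      exact hmem
    · obtain ⟨p₀, hp₀K, hp₀min⟩ := hKc.exists_isMinOn hKne hgc.continuousOn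
      have h1 : 1 < ‖p₀.1‖^2 + p₀.2^2 := by
        rcases eq_or_lt_of_le hp₀K.1.1 with h | h
        · exact absurd (hSU h.symm) hp₀K.2
        · exact h
      refine ⟨min (‖p₀.1‖^2 + p₀.2^2 - 1) (1/2), lt_min (by linarith) (by norm_num),
        fun p hp1 hp2 => ?_⟩
      by_contra hpU
      have hm2 := min_le_right (‖p₀.1‖^2 + p₀.2^2 - 1) (1/2)
      have hm1 := min_le_left (‖p₀.1‖^2 + p₀.2^2 - 1) (1/2)
      have hpK : p ∈ K := ⟨⟨hp1, by linarith⟩, hpU⟩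
      have hmin : ‖p₀.1‖^2 + p₀.2^2 ≤ ‖p.1‖^2 + p.2^2 := hp₀min hpK
      linarith
  set δ := min (ε/8) (1/8) with hδ_def
  have hδ0 : 0 < δ := lt_min (by positivity) (by norm_num)
  have hδ1 : δ ≤ 1/8 := min_le_right _ _
  have hδε : 8 * δ ≤ ε := by
    have := min_le_left (ε/8) (1/8); rw [hδ_def]; linarith
  refine ⟨δ, hδ0, by linarith, hh δ, hh_contDiff hδ0 hδ1, hh_injOn hδ0 hδ1, ?_, ?_, ?_, ?_, ?_⟩
  · intro v hv
    exact hh_fderiv_inj hδ0 hδ1 (by rwa [Metric.mem_closedBall, dist_zero_right] at hv)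
  · rintro q ⟨v, hv, rfl⟩
    rw [Metric.mem_closedBall, dist_zero_right] at hv
    have ht1 : ‖v‖^2 ≤ 1 := norm_sq_le_one hδ0 hδ1 hv
    have hkey := hh_norm_val hδ0 hδ1 (X := EuclideanSpace ℝ (Fin (n - 1))) v
    have hR1 : 1 ≤ RR δ (‖v‖^2) := RR_ge_one hδ0 hδ1 ht1
    have hR2 : RR δ (‖v‖^2) ≤ 1 + 2*δ := RR_le hδ0 hδ1 _
    apply hεU
    · rw [hkey]; nlinarith
    · rw [hkey]; nlinarith
  · ext p
    simp only [Set.mem_image, mem_sphere_zero_iff_norm, Set.mem_setOf_eq]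
    constructor
    · rintro ⟨v, hv, rfl⟩
      rw [hh_sphere hδ0 hδ1 hv]
      exact ⟨hv, rfl⟩
    · rintro ⟨hp1, hp2⟩
      refine ⟨p.1, hp1, ?_⟩
      rw [hh_sphere hδ0 hδ1 hp1]
      exact Prod.ext_iff.2 ⟨rfl, hp2.symm⟩
  · ext p
    simp only [Set.mem_image, Set.mem_setOf_eq]
    constructor
    · rintro ⟨v, ⟨hv1, hv2⟩, rfl⟩
      have hd : (0:ℝ) ≤ 1 - δ := by linarith
      have hflange := hh_flange hδ0 hδ1 (v := v) hv1
      have hvpos : 0 < ‖v‖ := lt_of_lt_of_le (by linarith) hv1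
      have htt : tt δ ≤ ‖v‖^2 := by rw [tt]; nlinarith
      have ht1 : ‖v‖^2 ≤ 1 := by nlinarith
      have hR1 : 1 ≤ RR δ (‖v‖^2) := RR_ge_one hδ0 hδ1 ht1
      have hnorm1 : ‖(hh δ v).1‖ = RR δ (‖v‖^2) := by
        rw [hflange]
        simp only
        rw [norm_smul, Real.norm_eq_abs,
          abs_of_pos (mul_pos (by linarith) (inv_pos.2 hvpos))]
        field_simp
      refine ⟨by rw [hflange], by rw [hnorm1]; exact hR1, ?_⟩
      rw [hnorm1]
      have h6 := et_anti hδ0 hδ1 htt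
      rw [et_tau hδ0 hδ1] at h6
      rw [RR]
      linarith
    · rintro ⟨hp2, hp1a, hp1b⟩
      have hρ : 0 < ‖p.1‖ := by linarith
      have hcont : ContinuousOn (RR δ) (Set.Icc (tt δ) 1) :=
        ((RR_contDiff (δ := δ)).continuous).continuousOn
      have hIcc : ‖p.1‖ ∈ Set.Icc (RR δ 1) (RR δ (tt δ)) := by
        rw [RR, RR, et_one hδ0 hδ1, et_tau hδ0 hδ1]
        constructor
        · linarith
        · linarith
      obtain ⟨t₀, ht₀, hRt₀⟩ :=
        intermediate_value_Icc' (le_of_lt (tt_lt_one hδ0 hδ1)) hcont hIcc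
      have htt0 : 0 < t₀ := lt_of_lt_of_le (tt_pos hδ0 hδ1) ht₀.1
      have hrt : 0 < Real.sqrt t₀ := Real.sqrt_pos.2 htt0
      set v : EuclideanSpace ℝ (Fin (n - 1)) := (Real.sqrt t₀ / ‖p.1‖) • p.1 with hv_def
      have hnv : ‖v‖ = Real.sqrt t₀ := by
        rw [hv_def, norm_smul, Real.norm_eq_abs, abs_of_pos (by positivity)]
        field_simp
      have hsq : ‖v‖^2 = t₀ := by rw [hnv, Real.sq_sqrt htt0.le]
      have h1δ : 1 - δ ≤ ‖v‖ := by
        rw [hnv]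
        calc 1 - δ = Real.sqrt (tt δ) := by rw [tt, Real.sqrt_sq (by linarith)]
        _ ≤ Real.sqrt t₀ := Real.sqrt_le_sqrt ht₀.1
      have hv1 : ‖v‖ ≤ 1 := by
        rw [hnv]
        calc Real.sqrt t₀ ≤ Real.sqrt 1 := Real.sqrt_le_sqrt ht₀.2
        _ = 1 := by simp
      refine ⟨v, ⟨h1δ, hv1⟩, ?_⟩
      rw [hh_flange hδ0 hδ1 h1δ]
      have hfst : (RR δ (‖v‖^2) * ‖v‖⁻¹) • v = p.1 := by
        rw [hsq, hnv, hv_def, smul_smul, hRt₀]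
        rw [show ‖p.1‖ * (Real.sqrt t₀)⁻¹ * (Real.sqrt t₀ / ‖p.1‖) = 1 by
          field_simp]
        rw [one_smul]
      exact Prod.ext_iff.2 ⟨hfst, hp2.symm⟩
  · intro v hv
    have h1 : ‖v‖^2 < 1 := by nlinarith [norm_nonneg v]
    have hkey := hh_norm_val hδ0 hδ1 (X := EuclideanSpace ℝ (Fin (n - 1))) v
    rw [hkey]
    have := RR_gt_one hδ0 hδ1 h1
    nlinarith
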